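/- Let k be a non-archimedean local field of characteristic p > 0 with residue field of cardinality q, with absolute value |·| taking values in {0} ∪ q^ℤ, and let k^m carry the max-norm ‖·‖. Let g(x) = Σ_α c_α x^α be a power series in m variables over k with A := Σ_α |c_α| < ∞ (so g converges absolutely on B(q) = {x ∈ k^m : ‖x‖ ≤ q}). Let D be the set of x ∈ k^m with ‖x‖ ≤ 1 such that ∂^β g(x) = 0 for every multi-index β with |β| ≤ p − 1. Then |g(x+h) − g(x)| ≤ A·‖h‖^p for all x ∈ D and all h ∈ k^m with ‖h‖ ≤ 1. -/

import Mathlib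

open scoped BigOperators
open IsUltrametricDist

set_option linter.unusedSectionVars false
set_option linter.unnecessarySimpa false
set_option maxHeartbeats 1000000

/-- The partial derivative of `g : k^m → k` in the `i`-th coordinate direction. -/
noncomputable def pdir {k : Type*} [NontriviallyNormedField k] {m : ℕ}
    (i : Fin m) (g : (Fin m → k) → k) : (Fin m → k) → k :=
  fun x => fderiv k g x (Pi.single i 1)

/-- The iterated partial derivative `∂^β g` associated to the multi-index `β`. -/
noncomputable def pmulti {k : Type*} [NontriviallyNormedField k] {m : ℕ}
    (β : Fin m → ℕ) (g : (Fin m → k) → k) : (Fin m → k) → k :=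
  (List.finRange m).foldr (fun i h => (pdir i)^[β i] h) g

section aux
variable {k : Type*} [NontriviallyNormedField k] [IsUltrametricDist k] {m : ℕ}

/-- The unit polyball. -/
def Bset (k : Type*) [NontriviallyNormedField k] (m : ℕ) : Set (Fin m → k) :=
  {y | ∀ i, ‖y i‖ ≤ 1}

lemma mem_Bset_of_norm {y : Fin m → k} (hy : ‖y‖ ≤ 1) : y ∈ Bset k m :=
  fun i => (norm_le_pi_norm y i).trans hy

lemma norm_le_one_of_mem_Bset {y : Fin m → k} (hy : y ∈ Bset k m) : ‖y‖ ≤ 1 :=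
  (pi_norm_le_iff_of_nonneg zero_le_one).2 hy

lemma isOpen_Bset : IsOpen (Bset k m) := by
  have : Bset k m = ⋂ i, (fun y : Fin m → k => y i) ⁻¹' Metric.closedBall 0 1 := by
    ext y
    simp [Bset, Set.mem_iInter, mem_closedBall_zero_iff]
  rw [this]
  exact isOpen_iInter_of_finite fun i =>
    (IsUltrametricDist.isOpen_closedBall (0 : k) one_ne_zero).preimage (continuous_apply i)

/-- Sum of monomial series. -/
noncomputable def Fc (c : (Fin m →₀ ℕ) → k) (x : Fin m → k) : k :=
  ∑' α : Fin m →₀ ℕ, c α * ∏ i, x i ^ α i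

lemma norm_monomial_le {y : Fin m → k} (hy : y ∈ Bset k m) (c : k) (α : Fin m →₀ ℕ) :
    ‖c * ∏ i, y i ^ α i‖ ≤ ‖c‖ := by
  rw [norm_mul]
  refine mul_le_of_le_one_right (norm_nonneg _) ?_
  rw [norm_prod]
  exact Finset.prod_le_one (fun i _ => by positivity)
    (fun i _ => by rw [norm_pow]; exact pow_le_one₀ (norm_nonneg _) (hy i))

lemma summable_Fc [CompleteSpace k] {c : (Fin m →₀ ℕ) → k} (hc : Summable fun α => ‖c α‖)
    {y : Fin m → k} (hy : y ∈ Bset k m) :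
    Summable fun α : Fin m →₀ ℕ => c α * ∏ i, y i ^ α i :=
  Summable.of_norm_bounded hc fun α => norm_monomial_le hy _ α

lemma norm_Fc_le [CompleteSpace k] {c : (Fin m →₀ ℕ) → k} (hc : Summable fun α => ‖c α‖)
    {y : Fin m → k} (hy : y ∈ Bset k m) :
    ‖Fc c y‖ ≤ ∑' α : Fin m →₀ ℕ, ‖c α‖ := by
  refine (norm_tsum_le_tsum_norm ?_).trans (Summable.tsum_le_tsum (fun α => norm_monomial_le hy _ α) ?_ hc)
  · exact hc.of_nonneg_of_le (fun _ => norm_nonneg _) (fun α => norm_monomial_le hy _ α)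
  · exact hc.of_nonneg_of_le (fun _ => norm_nonneg _) (fun α => norm_monomial_le hy _ α)

lemma one_dim_lip {b t : k} (hb : ‖b‖ ≤ 1) (ht : ‖t‖ ≤ 1) (n : ℕ) :
    ‖(b + t) ^ n - b ^ n‖ ≤ ‖t‖ := by
  rw [add_pow]
  rw [Finset.sum_range_succ]
  simp only [Nat.choose_self, Nat.cast_one, mul_one, Nat.sub_self, pow_zero]
  rw [add_sub_cancel_right]
  refine norm_sum_le_of_forall_le_of_nonneg (norm_nonneg t) fun j hj => ?_
  rw [Finset.mem_range] at hj
  rw [norm_mul, norm_mul, norm_pow, norm_pow]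
  have h1 : ‖b‖ ^ j ≤ 1 := pow_le_one₀ (norm_nonneg _) hb
  have h2 : ‖t‖ ^ (n - j) ≤ ‖t‖ := by
    calc ‖t‖ ^ (n - j) ≤ ‖t‖ ^ 1 := pow_le_pow_of_le_one (norm_nonneg t) ht (by omega)
      _ = ‖t‖ := pow_one _
  have h3 : ‖((n.choose j : ℕ) : k)‖ ≤ 1 := norm_natCast_le_one k _
  calc ‖b‖ ^ j * ‖t‖ ^ (n - j) * ‖((n.choose j : ℕ) : k)‖
      ≤ 1 * ‖t‖ * 1 := by gcongr
    _ = ‖t‖ := by ring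

lemma one_dim_sq {b t : k} (hb : ‖b‖ ≤ 1) (ht : ‖t‖ ≤ 1) (n : ℕ) :
    ‖(b + t) ^ n - b ^ n - (n : k) * b ^ (n - 1) * t‖ ≤ ‖t‖ ^ 2 := by
  match n with
  | 0 => simpa using sq_nonneg ‖t‖
  | (r + 1) =>
    rw [add_pow, Finset.sum_range_succ, Finset.sum_range_succ]
    have e1 : b ^ (r + 1) * t ^ (r + 1 - (r + 1)) * ((r + 1).choose (r + 1) : k) = b ^ (r + 1) := by
      simp
    have hexp : r + 1 - r = 1 := by omega
    have e2 : b ^ r * t ^ (r + 1 - r) * ((r + 1).choose r : k) = ((r:k) + 1) * b ^ r * t := by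
      rw [Nat.choose_succ_self_right, hexp, pow_one]
      push_cast
      ring
    rw [e1, e2]
    have e3 : ∀ X : k, X + ((r:k)+1) * b ^ r * t + b ^ (r+1) - b ^ (r+1)
        - ((r+1 : ℕ) : k) * b ^ (r + 1 - 1) * t = X := by
      intro X
      push_cast
      ring_nf
    rw [e3]
    refine norm_sum_le_of_forall_le_of_nonneg (by positivity) fun j hj => ?_
    rw [Finset.mem_range] at hj
    rw [norm_mul, norm_mul, norm_pow, norm_pow]
    have h1 : ‖b‖ ^ j ≤ 1 := pow_le_one₀ (norm_nonneg _) hb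
    have h2 : ‖t‖ ^ (r + 1 - j) ≤ ‖t‖ ^ 2 :=
      pow_le_pow_of_le_one (norm_nonneg t) ht (by omega)
    have h3 : ‖(((r+1).choose j : ℕ) : k)‖ ≤ 1 := norm_natCast_le_one k _
    calc ‖b‖ ^ j * ‖t‖ ^ (r + 1 - j) * ‖(((r+1).choose j : ℕ) : k)‖
        ≤ 1 * ‖t‖ ^ 2 * 1 := by gcongr
      _ = ‖t‖ ^ 2 := by ring

lemma mem_Bset_add {y v : Fin m → k} (hy : y ∈ Bset k m) (hv : v ∈ Bset k m) :
    (fun i => y i + v i) ∈ Bset k m := fun i =>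
  (norm_add_le_max (y i) (v i)).trans (max_le (hy i) (hv i))

lemma norm_prod_pow_le_one {z : Fin m → k} (hz : z ∈ Bset k m) (s : Finset (Fin m))
    (α : Fin m →₀ ℕ) : ‖∏ i ∈ s, z i ^ α i‖ ≤ 1 := by
  rw [norm_prod]
  exact Finset.prod_le_one (fun i _ => by positivity)
    (fun i _ => by rw [norm_pow]; exact pow_le_one₀ (norm_nonneg _) (hz i))

lemma prod_lip (s : Finset (Fin m)) (α : Fin m →₀ ℕ) {y v : Fin m → k}
    (hy : y ∈ Bset k m) (hv : v ∈ Bset k m) :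
    ‖∏ i ∈ s, (y i + v i) ^ α i - ∏ i ∈ s, y i ^ α i‖ ≤ ‖v‖ := by
  classical
  induction s using Finset.induction_on with
  | empty => simpa using norm_nonneg v
  | @insert a s ha IH =>
    rw [Finset.prod_insert ha, Finset.prod_insert ha]
    have key : (y a + v a) ^ α a * ∏ i ∈ s, (y i + v i) ^ α i
        - y a ^ α a * ∏ i ∈ s, y i ^ α i
        = ((y a + v a) ^ α a - y a ^ α a) * ∏ i ∈ s, (y i + v i) ^ α i
          + y a ^ α a * (∏ i ∈ s, (y i + v i) ^ α i - ∏ i ∈ s, y i ^ α i) := by ring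
    rw [key]
    refine (norm_add_le_max _ _).trans (max_le ?_ ?_)
    · rw [norm_mul]
      have hb1 : ‖(y a + v a) ^ α a - y a ^ α a‖ ≤ ‖v a‖ := one_dim_lip (hy a) (hv a) (α a)
      have hb2 : ‖∏ i ∈ s, (y i + v i) ^ α i‖ ≤ 1 :=
        norm_prod_pow_le_one (mem_Bset_add hy hv) s α
      calc ‖(y a + v a) ^ α a - y a ^ α a‖ * ‖∏ i ∈ s, (y i + v i) ^ α i‖
          ≤ ‖v a‖ * 1 := mul_le_mul hb1 hb2 (norm_nonneg _) (norm_nonneg _)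
        _ = ‖v a‖ := mul_one _
        _ ≤ ‖v‖ := norm_le_pi_norm v a
    · rw [norm_mul]
      have hb1 : ‖y a ^ α a‖ ≤ 1 := by
        rw [norm_pow]; exact pow_le_one₀ (norm_nonneg _) (hy a)
      calc ‖y a ^ α a‖ * ‖∏ i ∈ s, (y i + v i) ^ α i - ∏ i ∈ s, y i ^ α i‖
          ≤ 1 * ‖v‖ := mul_le_mul hb1 IH (norm_nonneg _) zero_le_one
        _ = ‖v‖ := one_mul _

lemma prod_taylor (s : Finset (Fin m)) (α : Fin m →₀ ℕ) {y v : Fin m → k}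
    (hy : y ∈ Bset k m) (hv : v ∈ Bset k m) :
    ‖∏ i ∈ s, (y i + v i) ^ α i - ∏ i ∈ s, y i ^ α i
      - ∑ j ∈ s, (∏ i ∈ s.erase j, y i ^ α i) * (((α j : k) * y j ^ (α j - 1)) * v j)‖
      ≤ ‖v‖ ^ 2 := by
  classical
  induction s using Finset.induction_on with
  | empty => simpa using sq_nonneg ‖v‖
  | @insert a s ha IH =>
    rw [Finset.prod_insert ha, Finset.prod_insert ha, Finset.sum_insert ha]
    have herase : (insert a s).erase a = s := Finset.erase_insert ha
    have hsum : ∑ j ∈ s, (∏ i ∈ (insert a s).erase j, y i ^ α i)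
        * (((α j : k) * y j ^ (α j - 1)) * v j)
        = y a ^ α a * ∑ j ∈ s, (∏ i ∈ s.erase j, y i ^ α i)
          * (((α j : k) * y j ^ (α j - 1)) * v j) := by
      rw [Finset.mul_sum]
      refine Finset.sum_congr rfl fun j hj => ?_
      have hja : j ≠ a := fun hja => ha (hja ▸ hj)
      rw [Finset.erase_insert_of_ne hja.symm,
        Finset.prod_insert (fun hmem => ha (Finset.mem_of_mem_erase hmem))]
      ring
    rw [herase, hsum]
    set A₁ := (y a + v a) ^ α a
    set A := y a ^ α a
    set A' := ((α a : k) * y a ^ (α a - 1)) * v a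
    set P₁ := ∏ i ∈ s, (y i + v i) ^ α i
    set P := ∏ i ∈ s, y i ^ α i
    set L := ∑ j ∈ s, (∏ i ∈ s.erase j, y i ^ α i) * (((α j : k) * y j ^ (α j - 1)) * v j)
    have key : A₁ * P₁ - A * P - (P * A' + A * L)
        = (A₁ - A - A') * P₁ + (A' * (P₁ - P) + A * (P₁ - P - L)) := by ring
    rw [key]
    have hA1 : ‖A₁ - A - A'‖ ≤ ‖v a‖ ^ 2 := by
      have := one_dim_sq (hy a) (hv a) (α a)
      simpa [A₁, A, A', mul_assoc] using this
    have hP1 : ‖P₁‖ ≤ 1 := norm_prod_pow_le_one (mem_Bset_add hy hv) s α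
    have hA'le : ‖A'‖ ≤ ‖v‖ := by
      have : ‖A'‖ = ‖(α a : k)‖ * ‖y a‖ ^ (α a - 1) * ‖v a‖ := by
        rw [show A' = ((α a : k) * y a ^ (α a - 1)) * v a from by ring,
          norm_mul, norm_mul, norm_pow]
      rw [this]
      calc ‖(α a : k)‖ * ‖y a‖ ^ (α a - 1) * ‖v a‖
          ≤ 1 * 1 * ‖v‖ :=
            mul_le_mul (mul_le_mul (norm_natCast_le_one k _)
              (pow_le_one₀ (norm_nonneg _) (hy a)) (by positivity) zero_le_one)
              (norm_le_pi_norm v a) (norm_nonneg _) (by norm_num)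
        _ = ‖v‖ := by ring
    have hAle : ‖A‖ ≤ 1 := by
      rw [show A = y a ^ α a from rfl, norm_pow]
      exact pow_le_one₀ (norm_nonneg _) (hy a)
    refine (norm_add_le_max _ _).trans (max_le ?_ ((norm_add_le_max _ _).trans (max_le ?_ ?_)))
    · rw [norm_mul]
      calc ‖A₁ - A - A'‖ * ‖P₁‖ ≤ ‖v a‖ ^ 2 * 1 :=
            mul_le_mul hA1 hP1 (norm_nonneg _) (by positivity)
        _ = ‖v a‖ ^ 2 := mul_one _
        _ ≤ ‖v‖ ^ 2 := by
            have := norm_le_pi_norm v a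
            exact pow_le_pow_left₀ (norm_nonneg _) this 2
    · rw [norm_mul]
      calc ‖A'‖ * ‖P₁ - P‖ ≤ ‖v‖ * ‖v‖ :=
            mul_le_mul hA'le (prod_lip s α hy hv) (norm_nonneg _) (norm_nonneg _)
        _ = ‖v‖ ^ 2 := (sq ‖v‖).symm
    · rw [norm_mul]
      calc ‖A‖ * ‖P₁ - P - L‖ ≤ 1 * ‖v‖ ^ 2 :=
            mul_le_mul hAle IH (norm_nonneg _) zero_le_one
        _ = ‖v‖ ^ 2 := one_mul _

noncomputable def Lmon (c : k) (α : Fin m →₀ ℕ) (y : Fin m → k) : (Fin m → k) →L[k] k :=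
  c • ∑ j, (∏ i ∈ Finset.univ.erase j, y i ^ α i) •
    (((α j : k) * y j ^ (α j - 1)) • ContinuousLinearMap.proj j)

lemma Lmon_apply (c : k) (α : Fin m →₀ ℕ) (y v : Fin m → k) :
    Lmon c α y v = c * ∑ j, (∏ i ∈ Finset.univ.erase j, y i ^ α i) *
      (((α j : k) * y j ^ (α j - 1)) * v j) := by
  simp [Lmon, smul_eq_mul]

lemma norm_Lmon_le {y : Fin m → k} (hy : y ∈ Bset k m) (c : k) (α : Fin m →₀ ℕ) :
    ‖Lmon c α y‖ ≤ ‖c‖ := by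
  refine ContinuousLinearMap.opNorm_le_bound _ (norm_nonneg c) fun v => ?_
  rw [Lmon_apply, norm_mul]
  refine mul_le_mul_of_nonneg_left ?_ (norm_nonneg c)
  refine norm_sum_le_of_forall_le_of_nonneg (norm_nonneg v) fun j _ => ?_
  rw [norm_mul, norm_mul, norm_mul]
  have h1 : ‖∏ i ∈ Finset.univ.erase j, y i ^ α i‖ ≤ 1 :=
    norm_prod_pow_le_one hy _ α
  have h2 : ‖(α j : k)‖ ≤ 1 := norm_natCast_le_one k (α j)
  have h3 : ‖y j ^ (α j - 1)‖ ≤ 1 := by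
    rw [norm_pow]; exact pow_le_one₀ (norm_nonneg _) (hy j)
  have h4 : ‖v j‖ ≤ ‖v‖ := norm_le_pi_norm v j
  calc ‖∏ i ∈ Finset.univ.erase j, y i ^ α i‖ * (‖(α j : k)‖ * ‖y j ^ (α j - 1)‖ * ‖v j‖)
      ≤ 1 * (1 * 1 * ‖v‖) := by gcongr
    _ = ‖v‖ := by ring

variable [CompleteSpace k]

lemma hasFDerivAt_Fc {c : (Fin m →₀ ℕ) → k} (hc : Summable fun α => ‖c α‖)
    {y : Fin m → k} (hy : y ∈ Bset k m) :
    HasFDerivAt (Fc c) (∑' α : Fin m →₀ ℕ, Lmon (c α) α y) y := by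
  rw [hasFDerivAt_iff_isLittleO_nhds_zero]
  have hsumL : Summable fun α : Fin m →₀ ℕ => Lmon (c α) α y :=
    Summable.of_norm_bounded hc fun α => norm_Lmon_le hy _ _
  have key : ∀ v : Fin m → k, v ∈ Bset k m →
      ‖Fc c (y + v) - Fc c y - (∑' α : Fin m →₀ ℕ, Lmon (c α) α y) v‖
        ≤ (∑' α : Fin m →₀ ℕ, ‖c α‖) * ‖v‖ ^ 2 := by
    intro v hv
    have hyv : y + v ∈ Bset k m := fun i =>
      (norm_add_le_max (y i) (v i)).trans (max_le (hy i) (hv i))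
    have hS1 : Summable fun α : Fin m →₀ ℕ => c α * ∏ i, (y + v) i ^ α i := summable_Fc hc hyv
    have hS2 : Summable fun α : Fin m →₀ ℕ => c α * ∏ i, y i ^ α i := summable_Fc hc hy
    have hS3 : Summable fun α : Fin m →₀ ℕ => Lmon (c α) α y v := by
      refine Summable.of_norm_bounded (hc.mul_right ‖v‖) fun α => ?_
      exact ((Lmon (c α) α y).le_opNorm v).trans
        (mul_le_mul_of_nonneg_right (norm_Lmon_le hy _ _) (norm_nonneg v))
    have happly : (∑' α : Fin m →₀ ℕ, Lmon (c α) α y) v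
        = ∑' α : Fin m →₀ ℕ, Lmon (c α) α y v :=
      (ContinuousLinearMap.apply k k v).map_tsum hsumL
    have hrem : ∀ α : Fin m →₀ ℕ,
        ‖c α * ∏ i, (y + v) i ^ α i - c α * ∏ i, y i ^ α i - Lmon (c α) α y v‖
          ≤ ‖c α‖ * ‖v‖ ^ 2 := by
      intro α
      rw [Lmon_apply]
      have hfactor : c α * ∏ i, (y + v) i ^ α i - c α * ∏ i, y i ^ α i
          - c α * ∑ j, (∏ i ∈ Finset.univ.erase j, y i ^ α i) *
            (((α j : k) * y j ^ (α j - 1)) * v j)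
          = c α * (∏ i, (y i + v i) ^ α i - ∏ i, y i ^ α i
            - ∑ j, (∏ i ∈ Finset.univ.erase j, y i ^ α i) *
              (((α j : k) * y j ^ (α j - 1)) * v j)) := by
        simp only [Pi.add_apply]
        ring
      rw [hfactor, norm_mul]
      exact mul_le_mul_of_nonneg_left (prod_taylor Finset.univ α hy hv) (norm_nonneg _)
    rw [happly, Fc, Fc, ← Summable.tsum_sub hS1 hS2, ← Summable.tsum_sub (hS1.sub hS2) hS3]
    have hsumnorm : Summable fun α : Fin m →₀ ℕ =>
        ‖c α * ∏ i, (y + v) i ^ α i - c α * ∏ i, y i ^ α i - Lmon (c α) α y v‖ :=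
      Summable.of_nonneg_of_le (fun _ => norm_nonneg _) (fun α => hrem α)
        (hc.mul_right (‖v‖ ^ 2))
    refine (norm_tsum_le_tsum_norm hsumnorm).trans ?_
    rw [← tsum_mul_right]
    exact Summable.tsum_le_tsum hrem hsumnorm (hc.mul_right (‖v‖ ^ 2))
  rw [Asymptotics.isLittleO_iff]
  intro ε hε
  have hA0 : 0 ≤ ∑' α : Fin m →₀ ℕ, ‖c α‖ := tsum_nonneg fun _ => norm_nonneg _
  set A0 := ∑' α : Fin m →₀ ℕ, ‖c α‖ with hA0def
  have hδ : 0 < ε / (A0 + 1) := div_pos hε (by linarith)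
  have h1 : ∀ᶠ v : Fin m → k in nhds 0, v ∈ Bset k m :=
    isOpen_Bset.mem_nhds (fun i => by simp)
  have h2 : ∀ᶠ v : Fin m → k in nhds 0, ‖v‖ ≤ ε / (A0 + 1) := by
    filter_upwards [Metric.closedBall_mem_nhds (0 : Fin m → k) hδ] with v hv
    simpa [mem_closedBall_zero_iff] using hv
  filter_upwards [h1, h2] with v hv1 hv2
  have hkey := key v hv1
  have hstep : A0 * ‖v‖ ≤ ε := by
    calc A0 * ‖v‖ ≤ A0 * (ε / (A0 + 1)) := mul_le_mul_of_nonneg_left hv2 hA0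
      _ ≤ ε := by
          rw [mul_div_assoc']
          rw [div_le_iff₀ (by linarith : (0:ℝ) < A0 + 1)]
          nlinarith
  calc ‖Fc c (y + v) - Fc c y - (∑' α : Fin m →₀ ℕ, Lmon (c α) α y) v‖
      ≤ A0 * ‖v‖ ^ 2 := hkey
    _ = (A0 * ‖v‖) * ‖v‖ := by ring
    _ ≤ ε * ‖v‖ := mul_le_mul_of_nonneg_right hstep (norm_nonneg v)

/-- Coefficientwise partial-derivative operator. -/
noncomputable def Tr (i : Fin m) (c : (Fin m →₀ ℕ) → k) : (Fin m →₀ ℕ) → k :=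
  fun γ => ((γ i + 1 : ℕ) : k) * c (γ + Finsupp.single i 1)

lemma summable_Tr {c : (Fin m →₀ ℕ) → k} (hc : Summable fun α => ‖c α‖) (i : Fin m) :
    Summable fun γ => ‖Tr i c γ‖ := by
  have h1 : Summable fun γ : Fin m →₀ ℕ => ‖c (γ + Finsupp.single i 1)‖ :=
    hc.comp_injective (add_left_injective (Finsupp.single i 1))
  refine Summable.of_nonneg_of_le (fun _ => norm_nonneg _) (fun γ => ?_) h1
  rw [Tr, norm_mul]
  exact mul_le_of_le_one_left (norm_nonneg _) (norm_natCast_le_one k _)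

lemma pdir_Fc {c : (Fin m →₀ ℕ) → k} (hc : Summable fun α => ‖c α‖) (i : Fin m)
    {y : Fin m → k} (hy : y ∈ Bset k m) :
    pdir i (Fc c) y = Fc (Tr i c) y := by
  have hF := hasFDerivAt_Fc hc hy
  rw [pdir, hF.fderiv]
  have hsum : Summable fun α : Fin m →₀ ℕ => Lmon (c α) α y :=
    Summable.of_norm_bounded hc fun α => norm_Lmon_le hy _ _
  have happly : (∑' α : Fin m →₀ ℕ, Lmon (c α) α y) (Pi.single i (1:k))
      = ∑' α : Fin m →₀ ℕ, Lmon (c α) α y (Pi.single i 1) := by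
    change (ContinuousLinearMap.apply k k (Pi.single i (1:k))) (∑' α : Fin m →₀ ℕ, Lmon (c α) α y) = _
    rw [(ContinuousLinearMap.apply k k (Pi.single i (1:k))).map_tsum hsum]
    rfl
  rw [happly]
  have heval : ∀ α : Fin m →₀ ℕ, Lmon (c α) α y (Pi.single i 1) =
      c α * ((α i : k) * y i ^ (α i - 1) * ∏ j ∈ Finset.univ.erase i, y j ^ α j) := by
    intro α
    rw [Lmon_apply]
    rw [Finset.sum_eq_single_of_mem i (Finset.mem_univ i)]
    · rw [Pi.single_eq_same]; ring
    · intro j _ hj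
      rw [Pi.single_eq_of_ne hj, mul_zero, mul_zero]
  rw [tsum_congr heval]
  have hinj : Function.Injective (fun γ : Fin m →₀ ℕ => γ + Finsupp.single i 1) :=
    add_left_injective _
  have hsupp : (Function.support fun α : Fin m →₀ ℕ =>
      c α * ((α i : k) * y i ^ (α i - 1) * ∏ j ∈ Finset.univ.erase i, y j ^ α j)) ⊆
      Set.range (fun γ : Fin m →₀ ℕ => γ + Finsupp.single i 1) := by
    intro α hα
    by_cases h0 : α i = 0
    · exfalso; apply hα; simp [h0]
    · exact ⟨α - Finsupp.single i 1, tsub_add_cancel_of_le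
        (Finsupp.single_le_iff.2 (Nat.one_le_iff_ne_zero.2 h0))⟩
  rw [← hinj.tsum_eq hsupp]
  refine tsum_congr fun γ => ?_
  beta_reduce
  have hii : ((γ + Finsupp.single i 1 : Fin m →₀ ℕ)) i = γ i + 1 := by
    simp [Finsupp.add_apply, Finsupp.single_eq_same]
  have hprod : ∏ j ∈ Finset.univ.erase i, y j ^ ((γ + Finsupp.single i 1 : Fin m →₀ ℕ)) j =
      ∏ j ∈ Finset.univ.erase i, y j ^ γ j := by
    refine Finset.prod_congr rfl fun j hj => ?_
    rw [Finsupp.add_apply, Finsupp.single_eq_of_ne' (Finset.ne_of_mem_erase hj).symm, add_zero]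
  rw [hii, hprod]
  have hmon : ∏ j, y j ^ γ j = y i ^ γ i * ∏ j ∈ Finset.univ.erase i, y j ^ γ j :=
    (Finset.mul_prod_erase Finset.univ _ (Finset.mem_univ i)).symm
  rw [Tr, hmon]
  simp only [Nat.add_sub_cancel]
  push_cast
  ring

lemma pdir_congr {f g : (Fin m → k) → k} (hfg : ∀ z ∈ Bset k m, f z = g z) (i : Fin m)
    {y : Fin m → k} (hy : y ∈ Bset k m) : pdir i f y = pdir i g y := by
  have h : f =ᶠ[nhds y] g := Filter.eventually_of_mem (isOpen_Bset.mem_nhds hy) hfg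
  rw [pdir, pdir, h.fderiv_eq]

lemma iter_pdir_Fc (i : Fin m) (n : ℕ) (c : (Fin m →₀ ℕ) → k)
    (hc : Summable fun α => ‖c α‖) (f : (Fin m → k) → k)
    (hf : ∀ z ∈ Bset k m, f z = Fc c z) :
    (∀ z ∈ Bset k m, (pdir i)^[n] f z = Fc ((Tr i)^[n] c) z)
      ∧ Summable (fun α => ‖(Tr i)^[n] c α‖) := by
  induction n generalizing c f with
  | zero => simpa using ⟨hf, hc⟩
  | succ n IH =>
    obtain ⟨h1, h2⟩ := IH c hc f hf
    constructor
    · intro z hz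
      rw [Function.iterate_succ_apply', pdir_congr h1 i hz, pdir_Fc h2 i hz,
        Function.iterate_succ_apply']
    · rw [Function.iterate_succ_apply']
      exact summable_Tr h2 i

lemma foldr_pdir_Fc (β : Fin m → ℕ) (l : List (Fin m)) (c : (Fin m →₀ ℕ) → k)
    (hc : Summable fun α => ‖c α‖) (f : (Fin m → k) → k)
    (hf : ∀ z ∈ Bset k m, f z = Fc c z) :
    (∀ z ∈ Bset k m, (l.foldr (fun i h => (pdir i)^[β i] h) f) z
        = Fc (l.foldr (fun i d => (Tr i)^[β i] d) c) z)
      ∧ Summable fun α => ‖(l.foldr (fun i d => (Tr i)^[β i] d) c) α‖ := by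
  induction l generalizing c f with
  | nil => simpa using ⟨hf, hc⟩
  | cons a l IH =>
    obtain ⟨h1, h2⟩ := IH c hc f hf
    exact iter_pdir_Fc a (β a) _ h2 _ h1

lemma Tr_iter_apply (i : Fin m) (n : ℕ) (c : (Fin m →₀ ℕ) → k) (γ : Fin m →₀ ℕ) :
    (Tr i)^[n] c γ = ((γ i + 1).ascFactorial n : k) * c (γ + Finsupp.single i n) := by
  induction n generalizing c with
  | zero => simp
  | succ n IH =>
    rw [Function.iterate_succ_apply, IH]
    have h1 : ((γ + Finsupp.single i n : Fin m →₀ ℕ)) i = γ i + n := by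
      simp [Finsupp.add_apply]
    rw [Tr]
    beta_reduce
    rw [h1]
    have h2 : γ + Finsupp.single i n + Finsupp.single i 1 = γ + Finsupp.single i (n + 1) := by
      rw [add_assoc, ← Finsupp.single_add]
    rw [h2, Nat.ascFactorial_succ]
    push_cast
    ring

lemma foldr_Tr_apply (β : Fin m → ℕ) (l : List (Fin m)) (hnd : l.Nodup)
    (c : (Fin m →₀ ℕ) → k) (γ : Fin m →₀ ℕ) :
    (l.foldr (fun i d => (Tr i)^[β i] d) c) γ
      = (∏ i ∈ l.toFinset, ((γ i + 1).ascFactorial (β i) : k))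
        * c (γ + ∑ i ∈ l.toFinset, Finsupp.single i (β i)) := by
  induction l generalizing γ with
  | nil => simp
  | cons a l IH =>
    have hal : a ∉ l := (List.nodup_cons.1 hnd).1
    have hnl : l.Nodup := (List.nodup_cons.1 hnd).2
    rw [List.foldr_cons, Tr_iter_apply, IH hnl]
    rw [List.toFinset_cons]
    have hanotin : a ∉ l.toFinset := by simpa using hal
    rw [Finset.prod_insert hanotin, Finset.sum_insert hanotin]
    have hsame : ∀ j ∈ l.toFinset, ((γ + Finsupp.single a (β a) : Fin m →₀ ℕ)) j = γ j := by
      intro j hj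
      have hja : j ≠ a := by rintro rfl; exact hanotin hj
      rw [Finsupp.add_apply, Finsupp.single_eq_of_ne' (Ne.symm hja), add_zero]
    rw [Finset.prod_congr rfl (fun j hj => by rw [hsame j hj])]
    rw [← add_assoc]
    ring

lemma pmulti_Fc (β : Fin m → ℕ) {c : (Fin m →₀ ℕ) → k} (hc : Summable fun α => ‖c α‖)
    {g : (Fin m → k) → k} (hg : ∀ z, g z = Fc c z) {y : Fin m → k} (hy : y ∈ Bset k m) :
    pmulti β g y = Fc (fun γ => (∏ i, ((γ i + 1).ascFactorial (β i) : k))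
      * c (γ + ∑ i, Finsupp.single i (β i))) y := by
  have h := (foldr_pdir_Fc β (List.finRange m) c hc g (fun z _ => hg z)).1 y hy
  rw [pmulti, h]
  have hcoef : (List.finRange m).foldr (fun i d => (Tr i)^[β i] d) c
      = fun γ => (∏ i, ((γ i + 1).ascFactorial (β i) : k))
        * c (γ + ∑ i, Finsupp.single i (β i)) := by
    funext γ
    rw [foldr_Tr_apply β _ (List.nodup_finRange m), List.toFinset_finRange]
  rw [hcoef]

/-- Function → Finsupp conversion. -/
noncomputable def Bf {m : ℕ} (β : Fin m → ℕ) : Fin m →₀ ℕ := ∑ i, Finsupp.single i (β i)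

lemma Bf_apply {m : ℕ} (β : Fin m → ℕ) (j : Fin m) : Bf β j = β j := by
  rw [Bf, Finsupp.finset_sum_apply]
  simp [Finsupp.single_apply]

lemma Bf_eq {m : ℕ} (β : Fin m → ℕ) : Bf β = Finsupp.equivFunOnFinite.symm β := by
  ext j
  rw [Bf_apply]
  rfl

lemma Bf_injective {m : ℕ} : Function.Injective (Bf (m := m)) := by
  have : Bf (m := m) = ⇑(Finsupp.equivFunOnFinite.symm) := funext Bf_eq
  rw [this]
  exact Finsupp.equivFunOnFinite.symm.injective

lemma Bf_add {m : ℕ} (β γ : Fin m → ℕ) : Bf (β + γ) = Bf β + Bf γ := by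
  ext j
  simp [Bf_apply]

/-- Hasse-derivative coefficients. -/
noncomputable def Hc (β : Fin m → ℕ) (c : (Fin m →₀ ℕ) → k) : (Fin m →₀ ℕ) → k :=
  fun γ => (∏ i, ((β i + γ i).choose (β i) : k)) * c (Bf β + γ)

lemma norm_prod_pow_le_one' {z : Fin m → k} (hz : z ∈ Bset k m) (β : Fin m → ℕ) :
    ‖∏ i, z i ^ β i‖ ≤ 1 := by
  rw [norm_prod]
  exact Finset.prod_le_one (fun i _ => by positivity)
    (fun i _ => by rw [norm_pow]; exact pow_le_one₀ (norm_nonneg _) (hz i))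

lemma norm_prod_choose_le_one (a b : Fin m → ℕ) :
    ‖∏ i, ((a i + b i).choose (a i) : k)‖ ≤ 1 := by
  rw [norm_prod]
  exact Finset.prod_le_one (fun i _ => norm_nonneg _)
    (fun i _ => norm_natCast_le_one k _)

lemma norm_Hc_le (β : Fin m → ℕ) (c : (Fin m →₀ ℕ) → k) (γ : Fin m →₀ ℕ) :
    ‖Hc β c γ‖ ≤ ‖c (Bf β + γ)‖ := by
  rw [Hc, norm_mul]
  refine mul_le_of_le_one_left (norm_nonneg _) ?_
  rw [norm_prod]
  exact Finset.prod_le_one (fun i _ => norm_nonneg _) (fun i _ => norm_natCast_le_one k _)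

lemma summable_Hc {c : (Fin m →₀ ℕ) → k} (hc : Summable fun α => ‖c α‖) (β : Fin m → ℕ) :
    Summable fun γ => ‖Hc β c γ‖ := by
  have h1 : Summable fun γ : Fin m →₀ ℕ => ‖c (Bf β + γ)‖ :=
    hc.comp_injective (add_right_injective (Bf β))
  exact Summable.of_nonneg_of_le (fun _ => norm_nonneg _) (fun γ => norm_Hc_le β c γ) h1

lemma norm_hpow_le {h : Fin m → k} (β : Fin m → ℕ) :
    ‖∏ i, h i ^ β i‖ ≤ ‖h‖ ^ (∑ i, β i) := by
  rw [norm_prod, ← Finset.prod_pow_eq_pow_sum]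
  refine Finset.prod_le_prod (fun i _ => by positivity) fun i _ => ?_
  rw [norm_pow]
  exact pow_le_pow_left₀ (norm_nonneg _) (norm_le_pi_norm h i) (β i)

/-- The reindexing equivalence. -/
def sigEquiv (m : ℕ) : (Fin m → ℕ) × (Fin m → ℕ) ≃
    Σ α : Fin m → ℕ, {β : Fin m → ℕ // β ∈ Fintype.piFinset fun i => Finset.range (α i + 1)} where
  toFun q := ⟨q.1 + q.2, ⟨q.1, by
    rw [Fintype.mem_piFinset]
    intro i
    rw [Finset.mem_range, Pi.add_apply]
    omega⟩⟩
  invFun σ := (σ.2.1, σ.1 - σ.2.1)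
  left_inv q := by
    refine Prod.ext rfl (funext fun i => ?_)
    simp only [Pi.sub_apply, Pi.add_apply]
    omega
  right_inv σ := by
    obtain ⟨α, β, hβ⟩ := σ
    have hle : ∀ i, β i ≤ α i := by
      rw [Fintype.mem_piFinset] at hβ
      intro i
      have := hβ i
      rw [Finset.mem_range] at this
      omega
    refine Sigma.subtype_ext ?_ rfl
    funext i
    simp only [Pi.add_apply, Pi.sub_apply]
    have := hle i
    omega

lemma sigEquiv_symm_apply {m : ℕ} (σ : Σ α : Fin m → ℕ,
    {β : Fin m → ℕ // β ∈ Fintype.piFinset fun i => Finset.range (α i + 1)}) :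
    (sigEquiv m).symm σ = (σ.2.1, σ.1 - σ.2.1) := rfl

lemma expansion {c : (Fin m →₀ ℕ) → k} (hc : Summable fun α => ‖c α‖)
    {x h : Fin m → k} (hx : x ∈ Bset k m) (hh : h ∈ Bset k m) (hlt : ‖h‖ < 1) :
    Fc c (x + h) = ∑' β : Fin m → ℕ, (∏ i, h i ^ β i) * Fc (Hc β c) x := by
  classical
  set r := ‖h‖ with hr
  have hr0 : 0 ≤ r := norm_nonneg h
  set W : (Fin m → ℕ) × (Fin m → ℕ) → k := fun q =>
    (∏ i, h i ^ q.1 i) * ((∏ i, ((q.1 i + q.2 i).choose (q.1 i) : k)) * c (Bf q.1 + Bf q.2)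
      * ∏ i, x i ^ q.2 i) with hW
  set u : (Fin m → ℕ) × (Fin m → ℕ) → ℝ := fun q =>
    ‖c (Bf q.1 + Bf q.2)‖ * r ^ (∑ i, q.1 i) with hu
  have hWu : ∀ q, ‖W q‖ ≤ u q := by
    intro q
    simp only [hW, hu]
    rw [norm_mul]
    have h1 : ‖∏ i, h i ^ q.1 i‖ ≤ r ^ (∑ i, q.1 i) := norm_hpow_le _
    have h2 : ‖(∏ i, ((q.1 i + q.2 i).choose (q.1 i) : k)) * c (Bf q.1 + Bf q.2)
        * ∏ i, x i ^ q.2 i‖ ≤ ‖c (Bf q.1 + Bf q.2)‖ := by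
      rw [norm_mul, norm_mul]
      calc ‖∏ i, ((q.1 i + q.2 i).choose (q.1 i) : k)‖ * ‖c (Bf q.1 + Bf q.2)‖
            * ‖∏ i, x i ^ q.2 i‖
          ≤ 1 * ‖c (Bf q.1 + Bf q.2)‖ * 1 :=
            mul_le_mul (mul_le_mul (norm_prod_choose_le_one _ _) le_rfl
              (norm_nonneg _) zero_le_one)
              (norm_prod_pow_le_one' hx _) (norm_nonneg _) (by positivity)
        _ = ‖c (Bf q.1 + Bf q.2)‖ := by ring
    calc ‖∏ i, h i ^ q.1 i‖ * ‖(∏ i, ((q.1 i + q.2 i).choose (q.1 i) : k))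
          * c (Bf q.1 + Bf q.2) * ∏ i, x i ^ q.2 i‖
        ≤ r ^ (∑ i, q.1 i) * ‖c (Bf q.1 + Bf q.2)‖ :=
          mul_le_mul h1 h2 (norm_nonneg _) (by positivity)
      _ = ‖c (Bf q.1 + Bf q.2)‖ * r ^ (∑ i, q.1 i) := mul_comm _ _
  have hcBf : Summable fun α : Fin m → ℕ => ‖c (Bf α)‖ := by
    have h1 : Summable ((fun α : Fin m →₀ ℕ => ‖c α‖) ∘ ⇑(Finsupp.equivFunOnFinite.symm)) :=
      (Finsupp.equivFunOnFinite.symm.summable_iff).2 hc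
    refine h1.congr fun β => ?_
    simp only [Function.comp_apply, ← Bf_eq]
  have hgeo : ∀ α : Fin m → ℕ,
      ∑ β ∈ Fintype.piFinset (fun i => Finset.range (α i + 1)), r ^ (∑ i, β i)
        ≤ ((1 - r)⁻¹) ^ m := by
    intro α
    have e1 : ∑ β ∈ Fintype.piFinset (fun i => Finset.range (α i + 1)), r ^ (∑ i, β i)
        = ∏ i, ∑ b ∈ Finset.range (α i + 1), r ^ b := by
      rw [Finset.prod_univ_sum]
      exact Finset.sum_congr rfl fun β _ => (Finset.prod_pow_eq_pow_sum _ _ _).symm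
    rw [e1]
    have hone : ∀ i : Fin m, ∑ b ∈ Finset.range (α i + 1), r ^ b ≤ (1 - r)⁻¹ := by
      intro i
      exact (Summable.sum_le_tsum (Finset.range (α i + 1)) (fun b _ => by positivity)
        (summable_geometric_of_lt_one hr0 hlt)).trans_eq (tsum_geometric_of_lt_one hr0 hlt)
    calc ∏ i, ∑ b ∈ Finset.range (α i + 1), r ^ b
        ≤ ∏ _i : Fin m, (1 - r)⁻¹ :=
          Finset.prod_le_prod (fun i _ => Finset.sum_nonneg fun b _ => by positivity)
            (fun i _ => hone i)
      _ = ((1 - r)⁻¹) ^ m := by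
          rw [Finset.prod_const, Finset.card_univ, Fintype.card_fin]
  have hfib : ∀ σ : Σ α : Fin m → ℕ,
      {β : Fin m → ℕ // β ∈ Fintype.piFinset fun i => Finset.range (α i + 1)},
      Bf (σ.2 : Fin m → ℕ) + Bf (σ.1 - (σ.2 : Fin m → ℕ)) = Bf σ.1 := by
    rintro ⟨α, β, hβ⟩
    rw [← Bf_add]
    congr 1
    funext i
    rw [Fintype.mem_piFinset] at hβ
    have := hβ i
    rw [Finset.mem_range] at this
    simp only [Pi.add_apply, Pi.sub_apply]
    omega
  have husig : Summable (u ∘ ⇑(sigEquiv m).symm) := by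
    refine (summable_sigma_of_nonneg ?_).2 ⟨?_, ?_⟩
    · intro q
      simp only [Function.comp_apply, hu]
      positivity
    · intro α
      exact Summable.of_finite
    · refine Summable.of_nonneg_of_le (fun α => tsum_nonneg fun q => ?_) (fun α => ?_)
        (hcBf.mul_right (((1 - r)⁻¹) ^ m))
      · simp only [Function.comp_apply, hu]
        positivity
      · rw [tsum_fintype]
        have e2 : ∀ β : {β : Fin m → ℕ // β ∈ Fintype.piFinset fun i => Finset.range (α i + 1)},
            (u ∘ ⇑(sigEquiv m).symm) ⟨α, β⟩ = ‖c (Bf α)‖ * r ^ (∑ i, (β : Fin m → ℕ) i) := by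
          intro β
          simp only [Function.comp_apply, sigEquiv_symm_apply, hu]
          rw [hfib ⟨α, β⟩]
        rw [Finset.sum_congr rfl fun β _ => e2 β, ← Finset.mul_sum]
        refine mul_le_mul_of_nonneg_left ?_ (norm_nonneg _)
        rw [Finset.univ_eq_attach, Finset.sum_attach
          (Fintype.piFinset fun i => Finset.range (α i + 1)) (fun b => r ^ (∑ i, b i))]
        exact hgeo α
  have husum : Summable u := ((sigEquiv m).symm.summable_iff).1 husig
  have hWsum : Summable W := Summable.of_norm_bounded husum hWu
  have hWsig : Summable (fun σ : Σ α : Fin m → ℕ,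
      {β : Fin m → ℕ // β ∈ Fintype.piFinset fun i => Finset.range (α i + 1)} =>
        W ((sigEquiv m).symm σ)) := ((sigEquiv m).symm.summable_iff).2 hWsum
  have hfinsum : ∀ α : Fin m → ℕ,
      ∑' β : {β : Fin m → ℕ // β ∈ Fintype.piFinset fun i => Finset.range (α i + 1)},
        W ((sigEquiv m).symm ⟨α, β⟩) = c (Bf α) * ∏ i, (x i + h i) ^ α i := by
    intro α
    rw [tsum_fintype]
    have e6 : ∀ β : {β : Fin m → ℕ // β ∈ Fintype.piFinset fun i => Finset.range (α i + 1)},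
        W ((sigEquiv m).symm ⟨α, β⟩) = W ((β : Fin m → ℕ), α - (β : Fin m → ℕ)) :=
      fun β => rfl
    rw [Finset.sum_congr rfl fun β _ => e6 β, Finset.univ_eq_attach, Finset.sum_attach
      (Fintype.piFinset fun i => Finset.range (α i + 1)) (fun b => W (b, α - b))]
    have e3 : ∀ β ∈ Fintype.piFinset fun i => Finset.range (α i + 1),
        W (β, α - β) = c (Bf α) * ∏ i, (((α i).choose (β i) : k)
          * x i ^ (α i - β i) * h i ^ β i) := by
      intro β hβ
      rw [Fintype.mem_piFinset] at hβ
      have hle : ∀ i, β i ≤ α i := fun i => by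
        have := hβ i; rw [Finset.mem_range] at this; omega
      have h1 : ∀ i, β i + (α - β) i = α i := fun i => by
        simp only [Pi.sub_apply]; have := hle i; omega
      have h2 : Bf β + Bf (α - β) = Bf α := by
        rw [← Bf_add]; congr 1; funext i; exact h1 i
      have hch : ∀ i : Fin m, β i + (α i - β i) = α i := fun i => by
        have := hle i; omega
      simp only [hW, Pi.sub_apply]
      rw [h2]
      have hprodch : ∏ i, ((β i + (α i - β i)).choose (β i) : k)
          = ∏ i, ((α i).choose (β i) : k) :=
        Finset.prod_congr rfl fun i _ => by rw [hch i]
      rw [hprodch, Finset.prod_mul_distrib, Finset.prod_mul_distrib]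
      ring
    rw [Finset.sum_congr rfl e3, ← Finset.mul_sum]
    congr 1
    rw [← Finset.prod_univ_sum (fun i => Finset.range (α i + 1))
      (fun i b => ((α i).choose b : k) * x i ^ (α i - b) * h i ^ b)]
    refine Finset.prod_congr rfl fun i _ => ?_
    rw [add_comm (x i) (h i), add_pow]
    exact Finset.sum_congr rfl fun b hb => by ring
  have hchain1 : Fc c (x + h) = ∑' q, W q := by
    rw [Fc]
    have e4 : ∑' α : Fin m →₀ ℕ, c α * ∏ i, (x + h) i ^ α i
        = ∑' α : Fin m → ℕ, c (Bf α) * ∏ i, (x i + h i) ^ α i := by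
      rw [← (Finsupp.equivFunOnFinite.symm.tsum_eq
        (fun α : Fin m →₀ ℕ => c α * ∏ i, (x + h) i ^ α i))]
      refine tsum_congr fun α => ?_
      rw [← Bf_eq]
      simp [Bf_apply]
    rw [e4]
    rw [← ((sigEquiv m).symm.tsum_eq W)]
    rw [Summable.tsum_sigma' (fun α => Summable.of_finite) hWsig]
    exact (tsum_congr fun α => hfinsum α).symm
  have hfiber2 : ∀ β : Fin m → ℕ, Summable fun γ : Fin m → ℕ => W (β, γ) := by
    intro β
    refine Summable.of_norm_bounded (g := fun γ => ‖c (Bf β + Bf γ)‖ * r ^ (∑ i, β i))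
      (Summable.mul_right _ ?_) (fun γ => hWu (β, γ))
    have h5 : Summable (((fun δ : Fin m →₀ ℕ => ‖c δ‖) ∘ (fun δ : Fin m →₀ ℕ => Bf β + δ))
        ∘ ⇑(Finsupp.equivFunOnFinite.symm)) :=
      (Finsupp.equivFunOnFinite.symm.summable_iff).2
        (hc.comp_injective (add_right_injective (Bf β)))
    refine h5.congr fun γ => ?_
    simp only [Function.comp_apply, ← Bf_eq]
  have hchain2 : ∑' q, W q = ∑' β : Fin m → ℕ, (∏ i, h i ^ β i) * Fc (Hc β c) x := by
    rw [Summable.tsum_prod' hWsum hfiber2]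
    refine tsum_congr fun β => ?_
    have e5 : ∀ γ : Fin m → ℕ, W (β, γ) = (∏ i, h i ^ β i)
        * (Hc β c (Bf γ) * ∏ i, x i ^ (Bf γ) i) := by
      intro γ
      simp only [hW, Hc, Bf_apply]
    rw [tsum_congr e5, tsum_mul_left]
    congr 1
    rw [Fc]
    rw [← (Finsupp.equivFunOnFinite.symm.tsum_eq
      (fun γ : Fin m →₀ ℕ => Hc β c γ * ∏ i, x i ^ γ i))]
    refine tsum_congr fun γ => ?_
    rw [← Bf_eq]
  rw [hchain1, hchain2]

end aux

/-- Let `k` be a non-archimedean local field of characteristic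
`p > 0`, and let `g(x) = Σ_α c_α x^α` be a power series in `m` variables with
`A := Σ_α |c_α| < ∞`.  If all partial derivatives `∂^β g` with `|β| ≤ p - 1`
vanish at `x`, `‖x‖ ≤ 1`, then `|g(x+h) - g(x)| ≤ A ‖h‖^p` for `‖h‖ ≤ 1`. -/
theorem stmt3 {k : Type*} [NontriviallyNormedField k] [IsUltrametricDist k]
    [LocallyCompactSpace k] {p : ℕ} [CharP k p] (hp : 0 < p)
    {m : ℕ} (c : (Fin m →₀ ℕ) → k)
    (hc : Summable fun α => ‖c α‖)
    (g : (Fin m → k) → k)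
    (hg : ∀ x : Fin m → k, g x = ∑' α : Fin m →₀ ℕ, c α * ∏ i, x i ^ α i)
    (A : ℝ) (hA : A = ∑' α : Fin m →₀ ℕ, ‖c α‖)
    (x h : Fin m → k) (hx : ‖x‖ ≤ 1) (hh : ‖h‖ ≤ 1)
    (hD : ∀ β : Fin m → ℕ, (∑ i, β i) ≤ p - 1 → pmulti β g x = 0) :
    ‖g (x + h) - g x‖ ≤ A * ‖h‖ ^ p := by
  haveI : ProperSpace k :=
    ProperSpace.of_nontriviallyNormedField_of_weaklyLocallyCompactSpace k
  have hxB : x ∈ Bset k m := mem_Bset_of_norm hx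
  have hhB : h ∈ Bset k m := mem_Bset_of_norm hh
  have hgFc : ∀ z : Fin m → k, g z = Fc c z := hg
  have hA0 : 0 ≤ A := by
    rw [hA]; exact tsum_nonneg fun _ => norm_nonneg _
  have hprime : p.Prime := (CharP.char_is_prime_or_zero k p).resolve_right (by omega)
  -- vanishing of the Hasse coefficients
  have hvanish : ∀ β : Fin m → ℕ, (∑ i, β i) ≤ p - 1 → Fc (Hc β c) x = 0 := by
    intro β hβ
    have h0 := hD β hβ
    rw [pmulti_Fc β hc hgFc hxB] at h0
    have hco : (fun γ : Fin m →₀ ℕ => (∏ i, ((γ i + 1).ascFactorial (β i) : k))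
        * c (γ + ∑ i, Finsupp.single i (β i)))
        = fun γ => ((∏ i, (β i).factorial : ℕ) : k) * Hc β c γ := by
      funext γ
      have hterm : ∀ i : Fin m, ((γ i + 1).ascFactorial (β i) : k)
          = ((β i).factorial : k) * ((β i + γ i).choose (β i) : k) := by
        intro i
        rw [← Nat.cast_mul, Nat.ascFactorial_eq_factorial_mul_choose, add_comm (β i) (γ i)]
      rw [Finset.prod_congr rfl fun i _ => hterm i, Finset.prod_mul_distrib, Hc]
      have hBf : (∑ i, Finsupp.single i (β i)) = Bf β := rfl
      rw [hBf, add_comm γ (Bf β)]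
      push_cast
      ring
    rw [hco] at h0
    have hfact : Fc (fun γ => ((∏ i, (β i).factorial : ℕ) : k) * Hc β c γ) x
        = ((∏ i, (β i).factorial : ℕ) : k) * Fc (Hc β c) x := by
      rw [Fc, Fc, ← tsum_mul_left]
      exact tsum_congr fun γ => by ring
    rw [hfact] at h0
    have hne : ((∏ i, (β i).factorial : ℕ) : k) ≠ 0 := by
      rw [Ne, CharP.cast_eq_zero_iff k p]
      intro hdvd
      obtain ⟨i, _, hdvd'⟩ := (Prime.dvd_finset_prod_iff hprime.prime _).1 hdvd
      have hle := (Nat.Prime.dvd_factorial hprime).1 hdvd'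
      have hsum := Finset.single_le_sum (f := β) (fun j _ => Nat.zero_le _) (Finset.mem_univ i)
      omega
    exact (mul_eq_zero.1 h0).resolve_left hne
  -- `g x = 0`
  have hfoldid : ∀ (l : List (Fin m)) (f : (Fin m → k) → k), l.foldr (fun _ h => h) f = f := by
    intro l f
    induction l with
    | nil => rfl
    | cons a l IH => simpa using IH
  have hgx : g x = 0 := by
    have h00 := hD (fun _ => 0) (by simp)
    have hpm : pmulti (fun _ => 0 : Fin m → ℕ) g = g := by
      rw [pmulti]
      have hfun : (fun (i : Fin m) (f : (Fin m → k) → k) =>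
          (pdir i)^[(fun _ : Fin m => 0) i] f) = fun _ f => f := by
        funext i f; simp
      rw [hfun, hfoldid]
    rwa [hpm] at h00
  rw [hgx, sub_zero]
  rcases lt_or_eq_of_le hh with hlt | heq
  · -- main case : ‖h‖ < 1
    rw [hgFc (x + h), expansion hc hxB hhB hlt]
    refine norm_tsum_le_of_forall_le_of_nonneg (by positivity) fun β => ?_
    by_cases hβ : (∑ i, β i) ≤ p - 1
    · rw [hvanish β hβ, mul_zero, norm_zero]
      positivity
    · have hge : p ≤ ∑ i, β i := by omega
      rw [norm_mul]
      have b1 : ‖∏ i, h i ^ β i‖ ≤ ‖h‖ ^ p :=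
        (norm_hpow_le β).trans (pow_le_pow_of_le_one (norm_nonneg h) hh hge)
      have b2 : ‖Fc (Hc β c) x‖ ≤ A := by
        refine (norm_Fc_le (summable_Hc hc β) hxB).trans ?_
        rw [hA]
        refine (Summable.tsum_le_tsum (fun γ => norm_Hc_le β c γ) (summable_Hc hc β)
          (hc.comp_injective (add_right_injective (Bf β)))).trans ?_
        exact tsum_comp_le_tsum_of_inj hc (fun a => norm_nonneg _)
          (add_right_injective (Bf β))
      calc ‖∏ i, h i ^ β i‖ * ‖Fc (Hc β c) x‖
          ≤ ‖h‖ ^ p * A := mul_le_mul b1 b2 (norm_nonneg _) (by positivity)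
        _ = A * ‖h‖ ^ p := mul_comm _ _
  · -- ‖h‖ = 1
    have hx_h : x + h ∈ Bset k m := fun i =>
      (norm_add_le_max (x i) (h i)).trans (max_le (hxB i) (hhB i))
    calc ‖g (x + h)‖ = ‖Fc c (x + h)‖ := by rw [hgFc (x + h)]
      _ ≤ ∑' α : Fin m →₀ ℕ, ‖c α‖ := norm_Fc_le hc hx_h
      _ = A := hA.symm
      _ = A * ‖h‖ ^ p := by rw [heq, one_pow, mul_one]
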